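/- Work over K = ℝ. Let f, g : [n] → [m] be injective monotone (strictly increasing) maps. The pullback f*ω_g lies in the degree-n component of Ω_n, which is a free module of rank one over R = MvPolynomial (Fin n) ℝ with basis dx₁ ∧ ⋯ ∧ dxₙ; write f*ω_g = P · dx₁ ∧ ⋯ ∧ dxₙ with P ∈ R. Then the Lebesgue integral of the polynomial function determined by P over Tₙ = {t ∈ ℝⁿ : tᵢ ≥ 0 for all i, t₁ + ⋯ + tₙ ≤ 1} equals 1 if f = g, and equals 0 if f ≠ g. (This is the orthonormality relation ∫_{Δⁿ} f*ω_g = δ_{f,g} showing that Whitney's map π_m is a projector onto the space of elementary forms.) -/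

import Mathlib

noncomputable section

/-- The DG-algebra of polynomial differential forms on the standard
`m`-simplex, modelled as the exterior algebra over
`R = MvPolynomial (Fin m) K` of the free module `R^m`. -/
abbrev Omega (K : Type) [Field K] (m : ℕ) :=
  ExteriorAlgebra (MvPolynomial (Fin m) K) (Fin m → MvPolynomial (Fin m) K)

/-- The coordinates `x₀, x₁, …, x_m`, where `x₁, …, x_m` are the polynomial
variables and `x₀ := 1 - (x₁ + ⋯ + x_m)`. -/
def xC (K : Type) [Field K] (m : ℕ) : Fin (m + 1) → MvPolynomial (Fin m) K :=
  Fin.cases (1 - ∑ i : Fin m, MvPolynomial.X i) (fun i => MvPolynomial.X i)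

/-- The vectors of `R^m` representing `dx₀, dx₁, …, dx_m`: the standard basis
vectors for `dx₁, …, dx_m`, and `-(dx₁ + ⋯ + dx_m)` for `dx₀`. -/
def vDX (K : Type) [Field K] (m : ℕ) :
    Fin (m + 1) → (Fin m → MvPolynomial (Fin m) K) :=
  Fin.cases (-∑ i : Fin m, Pi.single i 1) (fun i => Pi.single i 1)

/-- The one-forms `dx₀, dx₁, …, dx_m` in `Ω_m` (degree `1` elements of the
exterior algebra). -/
def dX (K : Type) [Field K] (m : ℕ) (j : Fin (m + 1)) : Omega K m :=
  ExteriorAlgebra.ι (MvPolynomial (Fin m) K) (vDX K m j)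

/-- The Whitney elementary form
`ω_f = n! Σᵢ (-1)ⁱ x_{f i} dx_{f 0} ∧ ⋯ ∧ (omit dx_{f i}) ∧ ⋯ ∧ dx_{f n}`
associated to a map `f : [n] → [m]`. -/
def omegaF (K : Type) [Field K] {n m : ℕ} (f : Fin (n + 1) → Fin (m + 1)) :
    Omega K m :=
  (n.factorial : MvPolynomial (Fin m) K) •
    ∑ i : Fin (n + 1),
      (-1 : MvPolynomial (Fin m) K) ^ (i : ℕ) •
        (algebraMap (MvPolynomial (Fin m) K) (Omega K m) (xC K m (f i)) *
          ((List.ofFn fun j : Fin (n + 1) => dX K m (f j)).eraseIdx (i : ℕ)).prod)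

/-- On polynomials, the pullback along `g : [n] → [m]` substitutes
`x_j ↦ Σ_{i ∈ [n], g i = j} x_i`. -/
def pullbackPoly (K : Type) [Field K] {n m : ℕ}
    (g : Fin (n + 1) → Fin (m + 1)) :
    MvPolynomial (Fin m) K →ₐ[K] MvPolynomial (Fin n) K :=
  MvPolynomial.aeval fun i : Fin m =>
    ∑ j ∈ Finset.univ.filter (fun j : Fin (n + 1) => g j = i.succ), xC K n j

/-- On one-forms, the pullback along `g : [n] → [m]` sends
`dx_j ↦ Σ_{i ∈ [n], g i = j} dx_i`; this is the corresponding vector. -/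
def pullbackVec (K : Type) [Field K] {n m : ℕ}
    (g : Fin (n + 1) → Fin (m + 1)) (i : Fin m) :
    Fin n → MvPolynomial (Fin n) K :=
  ∑ j ∈ Finset.univ.filter (fun j : Fin (n + 1) => g j = i.succ), vDX K n j

/-- The pullback `g* : Ω_m → Ω_n` along a map `g : [n] → [m]`: the (unique)
`K`-algebra homomorphism determined by `x_j ↦ Σ_{i ∈ [n], g i = j} x_i` and
`dx_j ↦ Σ_{i ∈ [n], g i = j} dx_i` for every `j ∈ [m]`. -/
def pullback (K : Type) [Field K] {n m : ℕ}
    (g : Fin (n + 1) → Fin (m + 1)) : Omega K m → Omega K n :=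
  letI φ : MvPolynomial (Fin m) K →+* Omega K n :=
    (algebraMap (MvPolynomial (Fin n) K) (Omega K n)).comp
      (pullbackPoly K g).toRingHom
  letI hcomm : ∀ (c : MvPolynomial (Fin m) K) (x : Omega K n),
      φ c * x = x * φ c := fun c x => Algebra.commutes (pullbackPoly K g c) x
  letI : Algebra (MvPolynomial (Fin m) K) (Omega K n) := φ.toAlgebra' hcomm
  letI L : (Fin m → MvPolynomial (Fin m) K) →ₗ[MvPolynomial (Fin m) K]
      Omega K n :=
    { toFun := fun v =>
        ExteriorAlgebra.ι (MvPolynomial (Fin n) K)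
          (∑ i : Fin m, pullbackPoly K g (v i) • pullbackVec K g i)
      map_add' := by
        intro u v
        show ExteriorAlgebra.ι (MvPolynomial (Fin n) K)
            (∑ i : Fin m, pullbackPoly K g ((u + v) i) • pullbackVec K g i) =
          ExteriorAlgebra.ι (MvPolynomial (Fin n) K)
              (∑ i : Fin m, pullbackPoly K g (u i) • pullbackVec K g i) +
            ExteriorAlgebra.ι (MvPolynomial (Fin n) K)
              (∑ i : Fin m, pullbackPoly K g (v i) • pullbackVec K g i)
        rw [← map_add, ← Finset.sum_add_distrib]
        exact congrArg _ (Finset.sum_congr rfl fun i _ => by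
          simp [Pi.add_apply, map_add, add_smul])
      map_smul' := by
        intro c v
        show ExteriorAlgebra.ι (MvPolynomial (Fin n) K)
            (∑ i : Fin m, pullbackPoly K g ((c • v) i) • pullbackVec K g i) =
          algebraMap (MvPolynomial (Fin n) K) (Omega K n)
              (pullbackPoly K g c) *
            ExteriorAlgebra.ι (MvPolynomial (Fin n) K)
              (∑ i : Fin m, pullbackPoly K g (v i) • pullbackVec K g i)
        rw [← Algebra.smul_def, ← map_smul, Finset.smul_sum]
        exact congrArg _ (Finset.sum_congr rfl fun i _ => by
          simp [Pi.smul_apply, smul_eq_mul, map_mul, smul_smul]) }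
  (ExteriorAlgebra.lift (MvPolynomial (Fin m) K)
    ⟨L, fun v => ExteriorAlgebra.ι_sq_zero _⟩ :
      Omega K m →ₐ[MvPolynomial (Fin m) K] Omega K n)

section
variable (K : Type) [Field K] {n m : ℕ}

noncomputable def pbHom (g : Fin (n + 1) → Fin (m + 1)) : Omega K m →+* Omega K n :=
  letI φ : MvPolynomial (Fin m) K →+* Omega K n :=
    (algebraMap (MvPolynomial (Fin n) K) (Omega K n)).comp
      (pullbackPoly K g).toRingHom
  letI hcomm : ∀ (c : MvPolynomial (Fin m) K) (x : Omega K n),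
      φ c * x = x * φ c := fun c x => Algebra.commutes (pullbackPoly K g c) x
  letI : Algebra (MvPolynomial (Fin m) K) (Omega K n) := φ.toAlgebra' hcomm
  letI L : (Fin m → MvPolynomial (Fin m) K) →ₗ[MvPolynomial (Fin m) K]
      Omega K n :=
    { toFun := fun v =>
        ExteriorAlgebra.ι (MvPolynomial (Fin n) K)
          (∑ i : Fin m, pullbackPoly K g (v i) • pullbackVec K g i)
      map_add' := by
        intro u v
        show ExteriorAlgebra.ι (MvPolynomial (Fin n) K)
            (∑ i : Fin m, pullbackPoly K g ((u + v) i) • pullbackVec K g i) =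
          ExteriorAlgebra.ι (MvPolynomial (Fin n) K)
              (∑ i : Fin m, pullbackPoly K g (u i) • pullbackVec K g i) +
            ExteriorAlgebra.ι (MvPolynomial (Fin n) K)
              (∑ i : Fin m, pullbackPoly K g (v i) • pullbackVec K g i)
        rw [← map_add, ← Finset.sum_add_distrib]
        exact congrArg _ (Finset.sum_congr rfl fun i _ => by
          simp [Pi.add_apply, map_add, add_smul])
      map_smul' := by
        intro c v
        show ExteriorAlgebra.ι (MvPolynomial (Fin n) K)
            (∑ i : Fin m, pullbackPoly K g ((c • v) i) • pullbackVec K g i) =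
          algebraMap (MvPolynomial (Fin n) K) (Omega K n)
              (pullbackPoly K g c) *
            ExteriorAlgebra.ι (MvPolynomial (Fin n) K)
              (∑ i : Fin m, pullbackPoly K g (v i) • pullbackVec K g i)
        rw [← Algebra.smul_def, ← map_smul, Finset.smul_sum]
        exact congrArg _ (Finset.sum_congr rfl fun i _ => by
          simp [Pi.smul_apply, smul_eq_mul, map_mul, smul_smul]) }
  (ExteriorAlgebra.lift (MvPolynomial (Fin m) K)
    ⟨L, fun v => ExteriorAlgebra.ι_sq_zero _⟩ :
      Omega K m →ₐ[MvPolynomial (Fin m) K] Omega K n).toRingHom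

theorem pullback_eq (g : Fin (n + 1) → Fin (m + 1)) :
    pullback K g = ⇑(pbHom K g) := rfl

theorem pbHom_ι (g : Fin (n + 1) → Fin (m + 1)) (v : Fin m → MvPolynomial (Fin m) K) :
    pbHom K g (ExteriorAlgebra.ι (MvPolynomial (Fin m) K) v) =
      ExteriorAlgebra.ι (MvPolynomial (Fin n) K)
        (∑ i : Fin m, pullbackPoly K g (v i) • pullbackVec K g i) := by
  letI φ : MvPolynomial (Fin m) K →+* Omega K n :=
    (algebraMap (MvPolynomial (Fin n) K) (Omega K n)).comp
      (pullbackPoly K g).toRingHom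
  letI hcomm : ∀ (c : MvPolynomial (Fin m) K) (x : Omega K n),
      φ c * x = x * φ c := fun c x => Algebra.commutes (pullbackPoly K g c) x
  letI : Algebra (MvPolynomial (Fin m) K) (Omega K n) := φ.toAlgebra' hcomm
  exact ExteriorAlgebra.lift_ι_apply _ _ _ _

theorem pbHom_algebraMap (g : Fin (n + 1) → Fin (m + 1)) (c : MvPolynomial (Fin m) K) :
    pbHom K g (algebraMap (MvPolynomial (Fin m) K) (Omega K m) c) =
      algebraMap (MvPolynomial (Fin n) K) (Omega K n) (pullbackPoly K g c) := by
  letI φ : MvPolynomial (Fin m) K →+* Omega K n :=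
    (algebraMap (MvPolynomial (Fin n) K) (Omega K n)).comp
      (pullbackPoly K g).toRingHom
  letI hcomm : ∀ (c : MvPolynomial (Fin m) K) (x : Omega K n),
      φ c * x = x * φ c := fun c x => Algebra.commutes (pullbackPoly K g c) x
  letI : Algebra (MvPolynomial (Fin m) K) (Omega K n) := φ.toAlgebra' hcomm
  exact AlgHom.commutes (A := Omega K m) (B := Omega K n)
    (ExteriorAlgebra.lift (MvPolynomial (Fin m) K) _) c

end

section
variable (K : Type) [Field K] {n m : ℕ}

theorem sum_xC : ∑ j : Fin (n + 1), xC K n j = 1 := by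
  rw [Fin.sum_univ_succ]
  simp [xC]

theorem sum_vDX : ∑ j : Fin (n + 1), vDX K n j = 0 := by
  rw [Fin.sum_univ_succ]
  simp [vDX]

theorem sum_fiber {A : Type*} [AddCommMonoid A] (f : Fin (n + 1) → Fin (m + 1))
    (c : Fin (n + 1) → A) :
    ∑ i : Fin m, ∑ k ∈ Finset.univ.filter (fun k => f k = i.succ), c k
      = ∑ k ∈ Finset.univ.filter (fun k => f k ≠ 0), c k := by
  simp_rw [Finset.sum_filter]
  rw [Finset.sum_comm]
  refine Finset.sum_congr rfl fun k _ => ?_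
  by_cases h : f k = 0
  · simp [h, (Fin.succ_ne_zero _).symm]
  · obtain ⟨j, hj⟩ := Fin.exists_succ_eq_of_ne_zero h
    simp [← hj, Fin.succ_inj, h, Fin.succ_ne_zero]

theorem pullbackPoly_xC (f : Fin (n + 1) → Fin (m + 1)) (j : Fin (m + 1)) :
    pullbackPoly K f (xC K m j) =
      ∑ i ∈ Finset.univ.filter (fun i => f i = j), xC K n i := by
  induction j using Fin.cases with
  | succ i => simp [pullbackPoly, xC]
  | zero =>
    have h1 : pullbackPoly K f (xC K m 0) =
        1 - ∑ i : Fin m, ∑ k ∈ Finset.univ.filter (fun k => f k = i.succ), xC K n k := by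
      simp [pullbackPoly, xC]
    rw [h1, sum_fiber]
    have h2 := Finset.sum_filter_add_sum_filter_not Finset.univ
      (fun k : Fin (n + 1) => f k = 0) (xC K n)
    rw [sum_xC] at h2
    rw [sub_eq_iff_eq_add, ← h2]

theorem pullbackVec_sum (f : Fin (n + 1) → Fin (m + 1)) (j : Fin (m + 1)) :
    ∑ i : Fin m, pullbackPoly K f (vDX K m j i) • pullbackVec K f i
      = ∑ k ∈ Finset.univ.filter (fun k => f k = j), vDX K n k := by
  induction j using Fin.cases with
  | succ i₀ =>
    have h1 : ∀ i : Fin m, vDX K m i₀.succ i = if i = i₀ then 1 else 0 := by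
      intro i; simp [vDX, Pi.single_apply]
    simp only [h1, apply_ite (pullbackPoly K f), map_one, map_zero, ite_smul, one_smul,
      zero_smul]
    rw [Finset.sum_ite_eq' Finset.univ i₀ (fun i => pullbackVec K f i)]
    simp [pullbackVec]
  | zero =>
    have h1 : ∀ i : Fin m, vDX K m 0 i = -1 := by
      intro i
      simp [vDX, Finset.sum_apply, Pi.single_apply]
    simp only [h1, map_neg, map_one, neg_smul, one_smul]
    have h3 : (∑ x : Fin m, pullbackVec K f x) =
        ∑ k ∈ Finset.univ.filter (fun k => f k ≠ 0), vDX K n k :=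
      sum_fiber f (vDX K n)
    rw [Finset.sum_neg_distrib, h3, neg_eq_iff_add_eq_zero]
    have h2 := Finset.sum_filter_add_sum_filter_not Finset.univ
      (fun k : Fin (n + 1) => f k = 0) (vDX K n)
    rw [sum_vDX] at h2
    rw [add_comm]
    exact h2

end

section
variable (K : Type) [Field K] {n m : ℕ}

theorem filter_eq_singleton {f : Fin (n + 1) → Fin (m + 1)} (hf : Function.Injective f)
    (j : Fin (n + 1)) :
    Finset.univ.filter (fun k => f k = f j) = {j} := by
  ext k
  simp [hf.eq_iff]

theorem filter_eq_empty {f : Fin (n + 1) → Fin (m + 1)} {j : Fin (m + 1)}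
    (hj : ∀ k, f k ≠ j) :
    Finset.univ.filter (fun k => f k = j) = ∅ := by
  simp [Finset.filter_eq_empty_iff, hj]

theorem pbHom_dX_mem {f : Fin (n + 1) → Fin (m + 1)} (hf : Function.Injective f)
    (j : Fin (n + 1)) : pbHom K f (dX K m (f j)) = dX K n j := by
  rw [dX, pbHom_ι, pullbackVec_sum, filter_eq_singleton hf j, Finset.sum_singleton]
  rfl

theorem pbHom_dX_not_mem {f : Fin (n + 1) → Fin (m + 1)} {j : Fin (m + 1)}
    (hj : ∀ k, f k ≠ j) : pbHom K f (dX K m j) = 0 := by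
  rw [dX, pbHom_ι, pullbackVec_sum, filter_eq_empty hj, Finset.sum_empty, map_zero]

theorem pullbackPoly_xC_mem {f : Fin (n + 1) → Fin (m + 1)} (hf : Function.Injective f)
    (j : Fin (n + 1)) : pullbackPoly K f (xC K m (f j)) = xC K n j := by
  rw [pullbackPoly_xC, filter_eq_singleton hf j, Finset.sum_singleton]

theorem pullbackPoly_xC_not_mem {f : Fin (n + 1) → Fin (m + 1)} {j : Fin (m + 1)}
    (hj : ∀ k, f k ≠ j) : pullbackPoly K f (xC K m j) = 0 := by
  rw [pullbackPoly_xC, filter_eq_empty hj, Finset.sum_empty]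

theorem eraseIdx_ofFn {α : Type*} (a : Fin (n + 1) → α) (i : Fin (n + 1)) :
    (List.ofFn a).eraseIdx (i : ℕ) = List.ofFn (fun j : Fin n => a (i.succAbove j)) := by
  apply List.ext_getElem
  · rw [List.length_eraseIdx_of_lt] <;> simp [i.isLt]
  · intro j h1 h2
    rw [List.getElem_eraseIdx]
    simp only [List.getElem_ofFn]
    split <;>
    · congr 1
      apply Fin.ext
      simp [Fin.succAbove, Fin.lt_def, *]

end

section

theorem alt_succAbove {R M N : Type*} [CommRing R] [AddCommGroup M] [Module R M]
    [AddCommGroup N] [Module R N] {n : ℕ} (D : M [⋀^Fin n]→ₗ[R] N)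
    (u : Fin (n + 1) → M) (hu : ∑ k, u k = 0) (i : Fin (n + 1)) :
    D (u ∘ i.succAbove) = (-1 : R) ^ (i : ℕ) • D (u ∘ Fin.succ) := by
  induction i using Fin.induction with
  | zero => simp [Fin.succAbove_zero]
  | succ i ih =>
    set t : Fin n → M := u ∘ (i.castSucc).succAbove with ht
    have hti : t i = u i.succ := by
      show u _ = _
      rw [Fin.succAbove_of_le_castSucc _ _ le_rfl]
    have key : u ∘ (i.succ).succAbove = Function.update t i (u i.castSucc) := by
      funext j
      rcases lt_trichotomy (j : ℕ) (i : ℕ) with h | h | h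
      · rw [Function.update_of_ne (by exact fun hji => absurd (congrArg Fin.val hji) (by omega)),
          ht]
        show u _ = u _
        rw [Fin.succAbove_of_castSucc_lt _ _
            (by rw [Fin.lt_def]; simp only [Fin.coe_castSucc, Fin.val_succ]; omega),
          Fin.succAbove_of_castSucc_lt _ _
            (by rw [Fin.lt_def]; simp only [Fin.coe_castSucc]; omega)]
      · have : j = i := Fin.ext h
        subst this
        rw [Function.update_self]
        show u _ = u _
        congr 1
        rw [Fin.succAbove_of_castSucc_lt _ _
          (by rw [Fin.lt_def]; simp only [Fin.coe_castSucc, Fin.val_succ]; omega)]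
      · rw [Function.update_of_ne (by exact fun hji => absurd (congrArg Fin.val hji) (by omega)),
          ht]
        show u _ = u _
        rw [Fin.succAbove_of_le_castSucc _ _
            (by rw [Fin.le_def]; simp only [Fin.coe_castSucc, Fin.val_succ]; omega),
          Fin.succAbove_of_le_castSucc _ _
            (by rw [Fin.le_def]; simp only [Fin.coe_castSucc]; omega)]
    have hui : u i.castSucc = -∑ k ∈ Finset.univ.erase i.castSucc, u k := by
      rw [eq_neg_iff_add_eq_zero, Finset.add_sum_erase _ u (Finset.mem_univ _), hu]
    have hsum : ∑ k ∈ Finset.univ.erase i.castSucc,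
        D.toMultilinearMap (Function.update t i (u k)) = D.toMultilinearMap t := by
      rw [Finset.sum_eq_single i.succ]
      · rw [← hti, Function.update_eq_self]
      · intro k hk hks
        have hk1 : k ≠ i.castSucc := (Finset.mem_erase.mp hk).1
        obtain ⟨j', hj'⟩ := Fin.exists_succAbove_eq hk1
        have hj'i : j' ≠ i := by
          rintro rfl
          rw [Fin.succAbove_of_le_castSucc _ _ le_rfl] at hj'
          exact hks hj'.symm
        have hupd : Function.update t i (u k) j' = u k := by
          rw [Function.update_of_ne hj'i]
          show u _ = u k
          rw [hj']
        exact D.map_eq_zero_of_eq _ (by rw [hupd, Function.update_self]) hj'i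
      · intro hns
        exact absurd (Finset.mem_erase.mpr ⟨by
          intro hh
          exact absurd (congrArg Fin.val hh) (by simp), Finset.mem_univ _⟩) hns
    rw [key, hui, ← D.coe_multilinearMap, MultilinearMap.map_update_neg,
      D.toMultilinearMap.map_update_sum, hsum, D.coe_multilinearMap, ih,
      Fin.val_succ, Fin.coe_castSucc, pow_succ, mul_neg_one, neg_smul]

end

section
variable (K : Type) [Field K] {n m : ℕ}

noncomputable def Dn : (Fin n → MvPolynomial (Fin n) K) [⋀^Fin n]→ₗ[MvPolynomial (Fin n) K]
    MvPolynomial (Fin n) K :=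
  (Pi.basisFun (MvPolynomial (Fin n) K) (Fin n)).det

noncomputable def Lam : Omega K n →ₗ[MvPolynomial (Fin n) K] MvPolynomial (Fin n) K :=
  ExteriorAlgebra.liftAlternating (Function.update (fun i => 0) n (Dn K))

theorem Lam_ιMulti (v : Fin n → (Fin n → MvPolynomial (Fin n) K)) :
    Lam K (ExteriorAlgebra.ιMulti (MvPolynomial (Fin n) K) n v) = Dn K v := by
  rw [Lam, ExteriorAlgebra.liftAlternating_apply_ιMulti, Function.update_self]

theorem Lam_mul (c : MvPolynomial (Fin n) K) (v : Fin n → (Fin n → MvPolynomial (Fin n) K)) :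
    Lam K (algebraMap (MvPolynomial (Fin n) K) (Omega K n) c *
      ExteriorAlgebra.ιMulti (MvPolynomial (Fin n) K) n v) = c * Dn K v := by
  rw [← Algebra.smul_def, map_smul, Lam_ιMulti, smul_eq_mul]

theorem Dn_single :
    Dn K (fun i : Fin n => (Pi.single i 1 : Fin n → MvPolynomial (Fin n) K)) = 1 := by
  have h : (fun i : Fin n => (Pi.single i 1 : Fin n → MvPolynomial (Fin n) K)) =
      ⇑(Pi.basisFun (MvPolynomial (Fin n) K) (Fin n)) := by
    funext i
    simp [Pi.basisFun_apply]
  rw [h, Dn, Module.Basis.det_self]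

theorem Dn_vDX (i : Fin (n + 1)) :
    Dn K (fun j => vDX K n (i.succAbove j)) = (-1) ^ (i : ℕ) := by
  have h := alt_succAbove (Dn K) (vDX K n) (sum_vDX K) i
  have h2 : vDX K n ∘ Fin.succ = fun j : Fin n => (Pi.single j 1 : Fin n → MvPolynomial (Fin n) K) := by
    funext j
    simp [vDX]
  rw [show (fun j => vDX K n (i.succAbove j)) = vDX K n ∘ i.succAbove from rfl, h, h2, Dn_single,
    smul_eq_mul, mul_one]

end

section
variable (K : Type) [Field K] {n m : ℕ}

def wv (f g : Fin (n + 1) → Fin (m + 1)) (j : Fin (n + 1)) :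
    Fin n → MvPolynomial (Fin n) K :=
  ∑ k ∈ Finset.univ.filter (fun k => f k = g j), vDX K n k

theorem pbHom_dX' (f g : Fin (n + 1) → Fin (m + 1)) (j : Fin (n + 1)) :
    pbHom K f (dX K m (g j)) =
      ExteriorAlgebra.ι (MvPolynomial (Fin n) K) (wv K f g j) := by
  rw [dX, pbHom_ι, pullbackVec_sum]
  rfl

theorem neg_one_pow_mul_self {R : Type*} [CommRing R] (k : ℕ) :
    (-1 : R) ^ k * (-1 : R) ^ k = 1 := by
  rw [← pow_add]
  exact Even.neg_one_pow ⟨k, rfl⟩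

theorem strictMono_eq_of_range_subset {f g : Fin (n + 1) → Fin (m + 1)}
    (hf : StrictMono f) (hg : StrictMono g) (hall : ∀ k, ∃ l, f l = g k) : f = g := by
  have hcf : (Finset.univ.image f).card = n + 1 := by
    rw [Finset.card_image_of_injective _ hf.injective, Finset.card_univ, Fintype.card_fin]
  have h1 := Finset.orderEmbOfFin_unique hcf
    (fun x => Finset.mem_image_of_mem f (Finset.mem_univ x)) hf
  have h2 := Finset.orderEmbOfFin_unique hcf (fun x => by
    obtain ⟨l, hl⟩ := hall x
    exact hl ▸ Finset.mem_image_of_mem f (Finset.mem_univ l)) hg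
  exact h1.trans h2.symm

set_option maxHeartbeats 2000000 in
set_option synthInstance.maxHeartbeats 1000000 in
theorem Lam_pullback (f g : Fin (n + 1) → Fin (m + 1)) (hf : StrictMono f)
    (hg : StrictMono g) :
    Lam K (pullback K f (omegaF K g)) =
      if f = g then (n.factorial : MvPolynomial (Fin n) K) else 0 := by
  classical
  have hterm : ∀ i : Fin (n + 1),
      pbHom K f (algebraMap (MvPolynomial (Fin m) K) (Omega K m) (xC K m (g i)) *
        ((List.ofFn fun j : Fin (n + 1) => dX K m (g j)).eraseIdx (i : ℕ)).prod) =
      algebraMap (MvPolynomial (Fin n) K) (Omega K n) (pullbackPoly K f (xC K m (g i))) *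
        ExteriorAlgebra.ιMulti (MvPolynomial (Fin n) K) n
          (fun j => wv K f g (i.succAbove j)) := by
    intro i
    rw [map_mul, pbHom_algebraMap, eraseIdx_ofFn, map_list_prod, List.map_ofFn,
      ExteriorAlgebra.ιMulti_apply]
    congr 2
    exact congrArg List.ofFn (funext fun j => pbHom_dX' K f g (i.succAbove j))
  have hmain : Lam K (pullback K f (omegaF K g)) =
      (n.factorial : MvPolynomial (Fin n) K) •
        ∑ i : Fin (n + 1), (-1 : MvPolynomial (Fin n) K) ^ (i : ℕ) •
          (pullbackPoly K f (xC K m (g i)) *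
            Dn K (fun j => wv K f g (i.succAbove j))) := by
    rw [pullback_eq, omegaF, Algebra.smul_def, map_mul, pbHom_algebraMap, map_natCast,
      map_sum]
    have hsummand : ∀ i : Fin (n + 1),
        pbHom K f ((-1 : MvPolynomial (Fin m) K) ^ (i : ℕ) •
          (algebraMap (MvPolynomial (Fin m) K) (Omega K m) (xC K m (g i)) *
            ((List.ofFn fun j : Fin (n + 1) => dX K m (g j)).eraseIdx (i : ℕ)).prod)) =
        (-1 : MvPolynomial (Fin n) K) ^ (i : ℕ) •
          (algebraMap (MvPolynomial (Fin n) K) (Omega K n)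
              (pullbackPoly K f (xC K m (g i))) *
            ExteriorAlgebra.ιMulti (MvPolynomial (Fin n) K) n
              (fun j => wv K f g (i.succAbove j))) := by
      intro i
      rw [Algebra.smul_def, map_mul, pbHom_algebraMap, hterm i, map_pow, map_neg, map_one,
        ← Algebra.smul_def]
    rw [Finset.sum_congr rfl fun i _ => hsummand i, ← Algebra.smul_def, map_smul, map_sum]
    congr 1
    refine Finset.sum_congr rfl fun i _ => ?_
    rw [map_smul, Lam_mul]
  rw [hmain]
  split_ifs with h
  · subst h
    have hterm2 : ∀ i : Fin (n + 1),
        (-1 : MvPolynomial (Fin n) K) ^ (i : ℕ) •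
          (pullbackPoly K f (xC K m (f i)) * Dn K (fun j => wv K f f (i.succAbove j))) =
        xC K n i := by
      intro i
      have hw : ∀ j, wv K f f j = vDX K n j := by
        intro j
        rw [wv, filter_eq_singleton hf.injective, Finset.sum_singleton]
      simp_rw [hw]
      rw [pullbackPoly_xC_mem K hf.injective, Dn_vDX, smul_eq_mul, mul_comm
        ((-1 : MvPolynomial (Fin n) K) ^ (i : ℕ)), mul_assoc, mul_comm
        ((-1 : MvPolynomial (Fin n) K) ^ (i : ℕ)), neg_one_pow_mul_self, mul_one]
    rw [Finset.sum_congr rfl fun i _ => hterm2 i, sum_xC, smul_eq_mul, mul_one]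
  · push_neg at h
    obtain ⟨k, hk⟩ : ∃ k, ∀ l, f l ≠ g k := by
      by_contra hc
      push_neg at hc
      exact h (strictMono_eq_of_range_subset hf hg hc)
    rw [Finset.sum_eq_zero, smul_zero]
    intro i _
    by_cases hik : i = k
    · subst hik
      rw [pullbackPoly_xC_not_mem K hk, zero_mul, smul_zero]
    · obtain ⟨j', hj'⟩ := Fin.exists_succAbove_eq (Ne.symm hik)
      have hwk : wv K f g k = 0 := by
        rw [wv, filter_eq_empty hk, Finset.sum_empty]
      have : Dn K (fun j => wv K f g (i.succAbove j)) = 0 :=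
        (Dn K).map_coord_zero j' (by rw [hj', hwk])
      rw [this, mul_zero, smul_zero]

end

open MeasureTheory in
theorem volume_simplex :
    ∀ (n : ℕ) (a : ℝ), 0 ≤ a →
      volume {t : Fin n → ℝ | (∀ i, 0 ≤ t i) ∧ ∑ i, t i ≤ a} =
        ENNReal.ofReal (a ^ n / n.factorial) := by
  intro n
  induction n with
  | zero =>
    intro a ha
    have h : {t : Fin 0 → ℝ | (∀ i, 0 ≤ t i) ∧ ∑ i, t i ≤ a} = Set.univ := by
      ext t
      simp [ha]
    rw [h]
    simp [MeasureTheory.volume_pi, MeasureTheory.Measure.pi_univ]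
  | succ n ih =>
    intro a ha
    set T : Set (ℝ × (Fin n → ℝ)) :=
      {p | 0 ≤ p.1 ∧ (∀ i, 0 ≤ p.2 i) ∧ p.1 + ∑ i, p.2 i ≤ a} with hT
    have hTm : MeasurableSet T := by
      have h1 : MeasurableSet {p : ℝ × (Fin n → ℝ) | 0 ≤ p.1} :=
        measurableSet_le measurable_const measurable_fst
      have h2 : MeasurableSet {p : ℝ × (Fin n → ℝ) | ∀ i, 0 ≤ p.2 i} := by
        rw [show {p : ℝ × (Fin n → ℝ) | ∀ i, 0 ≤ p.2 i} =
          ⋂ i, {p : ℝ × (Fin n → ℝ) | 0 ≤ p.2 i} from by ext p; simp]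
        exact MeasurableSet.iInter fun i =>
          measurableSet_le measurable_const (measurable_snd.eval (a:=i))
      have h3 : MeasurableSet {p : ℝ × (Fin n → ℝ) | p.1 + ∑ i, p.2 i ≤ a} :=
        measurableSet_le (measurable_fst.add
          (Finset.measurable_sum Finset.univ fun i _ =>
            measurable_snd.eval)) measurable_const
      rw [show T = {p : ℝ × (Fin n → ℝ) | 0 ≤ p.1} ∩
        ({p : ℝ × (Fin n → ℝ) | ∀ i, 0 ≤ p.2 i} ∩
          {p : ℝ × (Fin n → ℝ) | p.1 + ∑ i, p.2 i ≤ a}) from by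
        ext p; simp [hT, and_assoc]]
      exact h1.inter (h2.inter h3)
    set e := MeasurableEquiv.piFinSuccAbove (fun _ : Fin (n + 1) => ℝ) 0 with he
    have hpres := MeasureTheory.measurePreserving_piFinSuccAbove
      (fun _ : Fin (n + 1) => (volume : Measure ℝ)) 0
    have hST : {t : Fin (n + 1) → ℝ | (∀ i, 0 ≤ t i) ∧ ∑ i, t i ≤ a} = e ⁻¹' T := by
      ext t
      have happ : e t = (t 0, fun j => t ((0 : Fin (n + 1)).succAbove j)) := rfl
      simp only [Set.mem_preimage, happ, hT, Set.mem_setOf_eq, Fin.succAbove_zero]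
      rw [Fin.forall_fin_succ, Fin.sum_univ_succ]
      tauto
    have hvol : volume {t : Fin (n + 1) → ℝ | (∀ i, 0 ≤ t i) ∧ ∑ i, t i ≤ a} =
        ((volume : Measure ℝ).prod (volume : Measure (Fin n → ℝ))) T := by
      rw [hST]
      have := hpres.measure_preimage hTm.nullMeasurableSet
      rw [MeasureTheory.volume_pi]
      convert this using 2
      rw [MeasureTheory.volume_pi]
    rw [hvol, MeasureTheory.Measure.prod_apply hTm]
    have hsec : ∀ x : ℝ, (volume : Measure (Fin n → ℝ)) (Prod.mk x ⁻¹' T) =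
        Set.indicator (Set.Icc 0 a)
          (fun x => ENNReal.ofReal ((a - x) ^ n / n.factorial)) x := by
      intro x
      by_cases hx0 : 0 ≤ x
      · by_cases hxa : x ≤ a
        · have hpre : Prod.mk x ⁻¹' T =
              {y : Fin n → ℝ | (∀ i, 0 ≤ y i) ∧ ∑ i, y i ≤ a - x} := by
            ext y
            simp only [Set.mem_preimage, hT, Set.mem_setOf_eq, hx0, true_and]
            constructor
            · rintro ⟨h1, h2⟩; exact ⟨h1, by linarith⟩
            · rintro ⟨h1, h2⟩; exact ⟨h1, by linarith⟩
          rw [hpre, ih (a - x) (by linarith),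
            Set.indicator_of_mem (Set.mem_Icc.mpr ⟨hx0, hxa⟩)]
        · have hpre : Prod.mk x ⁻¹' T = ∅ := by
            ext y
            simp only [Set.mem_preimage, hT, Set.mem_setOf_eq, Set.mem_empty_iff_false,
              iff_false, not_and]
            intro _ h1
            have hy : 0 ≤ ∑ i, y i := Finset.sum_nonneg fun i _ => h1 i
            intro h2
            exact hxa (by linarith)
          rw [hpre, measure_empty,
            Set.indicator_of_notMem (by simp [Set.mem_Icc]; intro; linarith)]
      · have hpre : Prod.mk x ⁻¹' T = ∅ := by
          ext y
          simp only [Set.mem_preimage, hT, Set.mem_setOf_eq, Set.mem_empty_iff_false,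
            iff_false, not_and]
          intro h
          exact absurd h hx0
        rw [hpre, measure_empty,
          Set.indicator_of_notMem (by simp [Set.mem_Icc]; intro; linarith)]
    rw [MeasureTheory.lintegral_congr hsec, MeasureTheory.lintegral_indicator measurableSet_Icc]
    have hcont : Continuous fun x : ℝ => (a - x) ^ n / (n.factorial : ℝ) := by
      fun_prop
    have hint : IntegrableOn (fun x : ℝ => (a - x) ^ n / (n.factorial : ℝ)) (Set.Icc 0 a) :=
      hcont.integrableOn_Icc
    have hnn : (0 : ℝ → ℝ) ≤ᵐ[volume.restrict (Set.Icc 0 a)]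
        fun x : ℝ => (a - x) ^ n / (n.factorial : ℝ) := by
      refine MeasureTheory.ae_restrict_of_forall_mem measurableSet_Icc fun x hx => ?_
      have : (0:ℝ) ≤ (a - x) ^ n := pow_nonneg (by simp at hx; linarith [hx.2]) n
      positivity
    rw [← MeasureTheory.ofReal_integral_eq_lintegral_ofReal hint hnn]
    congr 1
    rw [MeasureTheory.integral_Icc_eq_integral_Ioc,
      ← intervalIntegral.integral_of_le ha]
    have : (∫ x in (0:ℝ)..a, (a - x) ^ n / (n.factorial : ℝ)) =
        (∫ x in (0:ℝ)..a, (a - x) ^ n) / (n.factorial : ℝ) := by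
      rw [intervalIntegral.integral_div]
    rw [this, intervalIntegral.integral_comp_sub_left (fun u : ℝ => u ^ n) a, sub_self,
      sub_zero, integral_pow]
    rw [Nat.factorial_succ, zero_pow (Nat.succ_ne_zero n), sub_zero]
    have hfac : (n.factorial : ℝ) ≠ 0 := by positivity
    push_cast
    field_simp

theorem Lam_rhs (K : Type) [Field K] {n : ℕ} (P : MvPolynomial (Fin n) K) :
    Lam K (algebraMap (MvPolynomial (Fin n) K) (Omega K n) P *
      (List.ofFn fun i : Fin n => dX K n i.succ).prod) = P := by
  have h : (List.ofFn fun i : Fin n => dX K n i.succ) =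
      List.ofFn fun i : Fin n => ExteriorAlgebra.ι (MvPolynomial (Fin n) K)
        ((fun i : Fin n => (Pi.single i 1 : Fin n → MvPolynomial (Fin n) K)) i) :=
    congrArg List.ofFn (funext fun i => by simp only [dX, vDX, Fin.cases_succ])
  rw [h, ← ExteriorAlgebra.ιMulti_apply, Lam_mul, Dn_single, mul_one]

open MeasureTheory in
set_option synthInstance.maxHeartbeats 1000000 in
/-- Work over `K = ℝ`. Let `f, g : [n] → [m]` be strictly increasing maps and
write the pullback `f*ω_g` (which lies in the degree-`n` component of `Ω_n`, a
free module of rank one with basis `dx₁ ∧ ⋯ ∧ dxₙ`) as `P ⬝ dx₁ ∧ ⋯ ∧ dxₙ`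
with `P ∈ R = MvPolynomial (Fin n) ℝ`. Then the Lebesgue integral of the
polynomial function of `P` over the solid standard simplex
`Tₙ = {t : ℝⁿ | tᵢ ≥ 0, Σ tᵢ ≤ 1}` equals `1` if `f = g` and `0` if `f ≠ g`:
the orthonormality relation `∫_{Δⁿ} f*ω_g = δ_{f,g}`. -/
theorem stmt12 (n m : ℕ) (f g : Fin (n + 1) → Fin (m + 1))
    (hf : StrictMono f) (hg : StrictMono g)
    (P : MvPolynomial (Fin n) ℝ)
    (hP : pullback ℝ f (omegaF ℝ g) =
      algebraMap (MvPolynomial (Fin n) ℝ) (Omega ℝ n) P *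
        (List.ofFn fun i : Fin n => dX ℝ n i.succ).prod) :
    (∫ t in {t : Fin n → ℝ | (∀ i, 0 ≤ t i) ∧ ∑ i, t i ≤ 1},
        MvPolynomial.eval t P) = if f = g then 1 else 0 := by
  have h1 := congrArg (Lam ℝ) hP
  rw [Lam_rhs] at h1
  have hPval : P = if f = g then ((n.factorial : ℕ) : MvPolynomial (Fin n) ℝ) else 0 := by
    rw [← h1, Lam_pullback ℝ f g hf hg]
  split_ifs with h
  · rw [hPval, if_pos h]
    simp only [map_natCast]
    rw [MeasureTheory.setIntegral_const, MeasureTheory.measureReal_def, volume_simplex n 1 zero_le_one,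
      ENNReal.toReal_ofReal (by positivity), one_pow, smul_eq_mul]
    have hfac : (n.factorial : ℝ) ≠ 0 := by positivity
    field_simp
  · rw [hPval, if_neg h]
    simp

end
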